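/- Let m ≥ 1, let W be the set of rotation-equivalence classes of admissible words of length 2m, and let U = (W →₀ ℚ) be the free ℚ-vector space on W, writing [t] for the basis vector of the rotation class of an admissible word t. Let R ⊆ U be the ℚ-submodule spanned by the elements 2[t] − [d₁(t)] − [d₂(t)], ranging over all admissible words t, and let M₁ ⊆ U be the submodule spanned by the classes [c_i] of the constant words, i ∈ ZMod 2m. Then the composite of the inclusion M₁ ↪ U with the quotient map U → U/R is a ℚ-linear isomorphism from M₁ onto U/R. -/

import Mathlib

/-- A word of length `2*m`: a cyclic sequence of letter indices. -/
abbrev Word (m : ℕ) := ZMod (2*m) → ZMod (2*m)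

/-- Rotation of a word by `r`. -/
def rot (m : ℕ) (t : Word m) (r : ZMod (2*m)) : Word m := fun k => t (k + r)

/-- `ε` is a decoration of the word `t`. -/
def IsDecoration (m : ℕ) (t : Word m) (ε : ZMod (2*m) → ℤ) : Prop :=
  (∀ k, ε k = 1 ∨ ε k = -1) ∧
  (∀ k, ε k = 1 → ε (k+1) = 1 → t (k+1) = t k + 1) ∧
  (∀ k, ε k = -1 → ε (k+1) = -1 → t (k+1) = t k - 1) ∧
  (∀ k, ε k ≠ ε (k+1) → t (k+1) = t k)

/-- A word is admissible if it admits a decoration. -/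
def Admissible (m : ℕ) (t : Word m) : Prop := ∃ ε, IsDecoration m t ε

/-- First half-double: `d₁(t)(k) = t(k)` for `0 ≤ k ≤ m-1`, and
`d₁(t)(k) = t(2m-1-k)` for `m ≤ k ≤ 2m-1`. -/
def d1 (m : ℕ) (t : Word m) : Word m := fun k =>
  if k.val < m then t k else t ((2*m - 1 - k.val : ℕ) : ZMod (2*m))

/-- Second half-double: `d₂(t) = d₁(rotation of t by m)`. -/
def d2 (m : ℕ) (t : Word m) : Word m := d1 m (rot m t (m : ZMod (2*m)))

/-- Admissible words. -/
def AdmWord (m : ℕ) := {t : Word m // Admissible m t}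

/-- Rotation-equivalence classes of admissible words. -/
def WCl (m : ℕ) := Quot (fun t t' : AdmWord m => ∃ r, t'.1 = rot m t.1 r)

/-- The rotation class of an admissible word. -/
def cls (m : ℕ) (t : Word m) (h : Admissible m t) : WCl m := Quot.mk _ ⟨t, h⟩

/-- The submodule of relations `2[t] - [d₁(t)] - [d₂(t)]`. -/
noncomputable def RSub (m : ℕ) : Submodule ℚ (WCl m →₀ ℚ) :=
  Submodule.span ℚ {u | ∃ (t : Word m) (ht : Admissible m t)
    (h1 : Admissible m (d1 m t)) (h2 : Admissible m (d2 m t)),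
    u = (2:ℚ) • Finsupp.single (cls m t ht) 1
        - Finsupp.single (cls m (d1 m t) h1) 1
        - Finsupp.single (cls m (d2 m t) h2) 1}

/-- The submodule spanned by the classes of the constant words. -/
noncomputable def MOne (m : ℕ) : Submodule ℚ (WCl m →₀ ℚ) :=
  Submodule.span ℚ {u | ∃ (i : ZMod (2*m)) (h : Admissible m (fun _ => i)),
    u = Finsupp.single (cls m (fun _ => i) h) 1}

section helpers
variable {m : ℕ}

lemma cast_val [NeZero (2*m)] (k : ZMod (2*m)) : ((k.val : ℕ) : ZMod (2*m)) = k :=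
  ZMod.natCast_rightInverse k

lemma succ_val [NeZero (2*m)] (k : ZMod (2*m)) (h : k.val + 1 < 2*m) :
    (k+1).val = k.val + 1 := by
  conv_lhs => rw [← cast_val k]
  rw [show ((k.val : ℕ) : ZMod (2*m)) + 1 = ((k.val + 1 : ℕ) : ZMod (2*m)) by push_cast; ring]
  exact ZMod.val_cast_of_lt h

lemma wrap_val [NeZero (2*m)] (k : ZMod (2*m)) (h : k.val = 2*m - 1) : k + 1 = 0 := by
  have h2 : 0 < 2*m := Nat.pos_of_ne_zero (NeZero.ne _)
  conv_lhs => rw [← cast_val k]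
  rw [h, show ((2*m - 1 : ℕ) : ZMod (2*m)) + 1 = ((2*m - 1 + 1 : ℕ) : ZMod (2*m)) by push_cast; ring]
  rw [Nat.sub_add_cancel h2]
  exact ZMod.natCast_self _

lemma rot_admissible (t : Word m) (h : Admissible m t) (r : ZMod (2*m)) :
    Admissible m (rot m t r) := by
  obtain ⟨ε, h0, h1, h2, h3⟩ := h
  refine ⟨fun k => ε (k + r), fun k => h0 _, fun k hk hk1 => ?_, fun k hk hk1 => ?_, fun k hk => ?_⟩
  · have := h1 (k + r) hk (by rwa [add_right_comm])
    simpa [rot, add_right_comm] using this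
  · have := h2 (k + r) hk (by rwa [add_right_comm])
    simpa [rot, add_right_comm] using this
  · have hk' : ε (k + r) ≠ ε (k + r + 1) := by
      simpa only [add_right_comm] using hk
    have := h3 (k+r) hk'
    simpa [rot, add_right_comm] using this

end helpers

section d1adm
variable {m : ℕ}

/-- decoration for d1 -/
def deps (m : ℕ) (ε : ZMod (2*m) → ℤ) : ZMod (2*m) → ℤ := fun k =>
  if k.val < m then ε k else -ε ((2*m - 1 - k.val : ℕ) : ZMod (2*m))

lemma deps_lt {ε : ZMod (2*m) → ℤ} {k : ZMod (2*m)} (h : k.val < m) : deps m ε k = ε k :=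
  if_pos h

lemma deps_ge {ε : ZMod (2*m) → ℤ} {k : ZMod (2*m)} (h : ¬ k.val < m) :
    deps m ε k = -ε ((2*m - 1 - k.val : ℕ) : ZMod (2*m)) := if_neg h

lemma d1_lt {t : Word m} {k : ZMod (2*m)} (h : k.val < m) : d1 m t k = t k := if_pos h

lemma d1_ge {t : Word m} {k : ZMod (2*m)} (h : ¬ k.val < m) :
    d1 m t k = t ((2*m - 1 - k.val : ℕ) : ZMod (2*m)) := if_neg h

lemma d1_admissible (hm : 1 ≤ m) (t : Word m) (h : Admissible m t) :
    Admissible m (d1 m t) := by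
  haveI : NeZero (2*m) := ⟨by omega⟩
  obtain ⟨ε, h0, h1, h2, h3⟩ := h
  have hez : ∀ j, ε j ≠ 0 := by intro j; rcases h0 j with h | h <;> omega
  have main : ∀ k : ZMod (2*m),
      (deps m ε k = 1 → deps m ε (k+1) = 1 → d1 m t (k+1) = d1 m t k + 1) ∧
      (deps m ε k = -1 → deps m ε (k+1) = -1 → d1 m t (k+1) = d1 m t k - 1) ∧
      (deps m ε k ≠ deps m ε (k+1) → d1 m t (k+1) = d1 m t k) := by
    intro k
    have hv : k.val < 2*m := ZMod.val_lt k
    rcases Nat.lt_or_ge (k.val + 1) m with hc | hc'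
    · -- case 1 : k.val + 1 < m
      have hval : (k+1).val = k.val + 1 := succ_val k (by omega)
      have e1 : deps m ε k = ε k := deps_lt (by omega)
      have e2 : deps m ε (k+1) = ε (k+1) := deps_lt (by omega)
      have f1 : d1 m t k = t k := d1_lt (by omega)
      have f2 : d1 m t (k+1) = t (k+1) := d1_lt (by omega)
      rw [e1, e2, f1, f2]
      exact ⟨h1 k, h2 k, h3 k⟩
    rcases Nat.lt_or_ge k.val m with hc | hc
    · -- case 2 : k.val + 1 = m
      have hkm : k.val + 1 = m := by omega
      have hval : (k+1).val = m := by rw [succ_val k (by omega), hkm]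
      have hk : ((m - 1 : ℕ) : ZMod (2*m)) = k := by
        rw [← cast_val k]; congr 1; omega
      have e1 : deps m ε k = ε k := deps_lt (by omega)
      have e2 : deps m ε (k+1) = -ε k := by
        rw [deps_ge (by omega), hval, show 2*m - 1 - m = m - 1 from by omega, hk]
      have f1 : d1 m t k = t k := d1_lt (by omega)
      have f2 : d1 m t (k+1) = t k := by
        rw [d1_ge (by omega), hval, show 2*m - 1 - m = m - 1 from by omega, hk]
      refine ⟨?_, ?_, ?_⟩
      · intro ha hb; rw [e1] at ha; rw [e2] at hb; omega
      · intro ha hb; rw [e1] at ha; rw [e2] at hb; omega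
      · intro _; rw [f1, f2]
    rcases Nat.lt_or_ge (k.val + 1) (2*m) with hc2 | hc2
    · -- case 3 : m ≤ k.val, k.val + 1 < 2*m
      set j : ZMod (2*m) := ((2*m - 2 - k.val : ℕ) : ZMod (2*m)) with hj
      have hval : (k+1).val = k.val + 1 := succ_val k (by omega)
      have harg1 : ((2*m - 1 - k.val : ℕ) : ZMod (2*m)) = j + 1 := by
        rw [hj, show 2*m - 1 - k.val = (2*m - 2 - k.val) + 1 from by omega]
        push_cast; ring
      have e1 : deps m ε k = -ε (j+1) := by rw [deps_ge (by omega), harg1]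
      have e2 : deps m ε (k+1) = -ε j := by
        rw [deps_ge (by omega : ¬ (k+1).val < m), hval,
          show 2*m - 1 - (k.val + 1) = 2*m - 2 - k.val from by omega]
      have f1 : d1 m t k = t (j+1) := by rw [d1_ge (by omega), harg1]
      have f2 : d1 m t (k+1) = t j := by
        rw [d1_ge (by omega : ¬ (k+1).val < m), hval,
          show 2*m - 1 - (k.val + 1) = 2*m - 2 - k.val from by omega]
      refine ⟨?_, ?_, ?_⟩
      · intro ha hb
        rw [e1] at ha; rw [e2] at hb
        have hj1 : ε j = -1 := by omega
        have hj2 : ε (j+1) = -1 := by omega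
        rw [f1, f2, h2 j hj1 hj2]; ring
      · intro ha hb
        rw [e1] at ha; rw [e2] at hb
        have hj1 : ε j = 1 := by omega
        have hj2 : ε (j+1) = 1 := by omega
        rw [f1, f2, h1 j hj1 hj2]; ring
      · intro hne
        rw [e1, e2] at hne
        have : ε j ≠ ε (j+1) := by intro hh; exact hne (by rw [hh])
        rw [f1, f2, h3 j this]
    · -- case 4 : k.val = 2*m - 1
      have hkv : k.val = 2*m - 1 := by omega
      have hk1 : k + 1 = 0 := wrap_val k hkv
      have hz : ((0:ℕ) : ZMod (2*m)) = 0 := Nat.cast_zero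
      have hval0 : (0 : ZMod (2*m)).val = 0 := ZMod.val_zero
      have e1 : deps m ε k = -ε 0 := by
        rw [deps_ge (by omega), hkv, show 2*m - 1 - (2*m-1) = 0 from by omega, hz]
      have e2 : deps m ε (k+1) = ε 0 := by
        rw [hk1, deps_lt (by omega : (0 : ZMod (2*m)).val < m)]
      have f1 : d1 m t k = t 0 := by
        rw [d1_ge (by omega), hkv, show 2*m - 1 - (2*m-1) = 0 from by omega, hz]
      have f2 : d1 m t (k+1) = t 0 := by
        rw [hk1, d1_lt (by omega : (0 : ZMod (2*m)).val < m)]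
      refine ⟨?_, ?_, ?_⟩
      · intro ha hb; rw [e1] at ha; rw [e2] at hb; omega
      · intro ha hb; rw [e1] at ha; rw [e2] at hb; omega
      · intro _; rw [f1, f2]
  refine ⟨deps m ε, fun k => ?_, fun k => (main k).1, fun k => (main k).2.1, fun k => (main k).2.2⟩
  · unfold deps; split
    · exact h0 _
    · rcases h0 (((2*m - 1 - k.val : ℕ)) : ZMod (2*m)) with h | h <;> rw [h] <;> simp

lemma d2_admissible (hm : 1 ≤ m) (t : Word m) (h : Admissible m t) :
    Admissible m (d2 m t) :=
  d1_admissible hm _ (rot_admissible t h _)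

lemma const_admissible (hm : 1 ≤ m) (i : ZMod (2*m)) :
    Admissible m (fun _ => i) := by
  haveI : NeZero (2*m) := ⟨by omega⟩
  refine ⟨fun k => if Even k.val then 1 else -1, fun k => ?_, fun k ha hb => ?_, fun k ha hb => ?_, fun k _ => rfl⟩
  · beta_reduce; split <;> simp
  · exfalso
    have h1 : Even k.val := by by_contra hh; simp [hh] at ha
    have h2 : Even (k+1).val := by by_contra hh; simp [hh] at hb
    have hv : k.val < 2*m := ZMod.val_lt k
    rcases Nat.lt_or_ge (k.val + 1) (2*m) with hc | hc
    · rw [succ_val k hc] at h2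
      rw [Nat.even_add_one] at h2; exact h2 h1
    · have hkv : k.val = 2*m - 1 := by omega
      rw [hkv, Nat.even_sub (by omega)] at h1
      simp [Nat.even_mul] at h1
  · exfalso
    have h1 : ¬ Even k.val := by by_contra hh; simp [hh] at ha
    have h2 : ¬ Even (k+1).val := by by_contra hh; simp [hh] at hb
    have hv : k.val < 2*m := ZMod.val_lt k
    rcases Nat.lt_or_ge (k.val + 1) (2*m) with hc | hc
    · rw [succ_val k hc, Nat.even_add_one] at h2; exact h2 h1
    · have hkv : k.val = 2*m - 1 := by omega
      have h0 : (k+1).val = 0 := by rw [wrap_val k hkv]; exact ZMod.val_zero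
      rw [h0] at h2; simp at h2

end d1adm

section counting
variable {m : ℕ}

/-- number of nonzero steps -/
def nz (m : ℕ) [NeZero (2*m)] (t : Word m) : ℕ :=
  (Finset.univ.filter (fun k : ZMod (2*m) => t (k+1) ≠ t k)).card

/-- nonzero steps in the first window -/
def Tset (m : ℕ) [NeZero (2*m)] (u : Word m) : Finset (ZMod (2*m)) :=
  Finset.univ.filter (fun j : ZMod (2*m) => j.val < m - 1 ∧ u (j+1) ≠ u j)

lemma nz_zero_const [NeZero (2*m)] (t : Word m) (h : nz m t = 0) : ∃ i, t = fun _ => i := by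
  have hstep : ∀ k : ZMod (2*m), t (k+1) = t k := by
    intro k
    by_contra hk
    have : k ∈ Finset.univ.filter (fun k : ZMod (2*m) => t (k+1) ≠ t k) := by
      simp [hk]
    rw [Finset.card_eq_zero.mp h] at this
    exact absurd this (Finset.notMem_empty _)
  have hnat : ∀ j : ℕ, t (j : ZMod (2*m)) = t 0 := by
    intro j
    induction j with
    | zero => simp
    | succ n ih => rw [show ((n+1 : ℕ) : ZMod (2*m)) = (n : ZMod (2*m)) + 1 by push_cast; ring, hstep, ih]
  exact ⟨t 0, funext fun k => by rw [← cast_val k, hnat]⟩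

lemma nz_d1_le (hm : 1 ≤ m) [NeZero (2*m)] (u : Word m) :
    nz m (d1 m u) ≤ 2 * (Tset m u).card := by
  classical
  set s := Finset.univ.filter (fun k : ZMod (2*m) => d1 m u (k+1) ≠ d1 m u k) with hs
  have hsplit : (s.filter (fun k : ZMod (2*m) => k.val < m)).card
      + (s.filter (fun k : ZMod (2*m) => ¬ k.val < m)).card = s.card :=
    Finset.card_filter_add_card_filter_not _
  have hb1 : (s.filter (fun k : ZMod (2*m) => k.val < m)).card ≤ (Tset m u).card := by
    apply Finset.card_le_card_of_injOn id
    · intro k hk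
      simp only [hs, Finset.mem_coe, Finset.mem_filter, Finset.mem_univ, true_and] at hk
      obtain ⟨hne, hlt⟩ := hk
      -- k.val ≠ m - 1
      have hne1 : k.val + 1 ≠ m := by
        intro hh
        have hval : (k+1).val = m := by rw [succ_val k (by omega), hh]
        have hkc : ((m - 1 : ℕ) : ZMod (2*m)) = k := by
          rw [← cast_val k]; congr 1; omega
        have f1 : d1 m u k = u k := d1_lt hlt
        have f2 : d1 m u (k+1) = u k := by
          rw [d1_ge (by omega), hval, show 2*m - 1 - m = m - 1 from by omega, hkc]
        exact hne (by rw [f1, f2])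
      have hlt1 : k.val + 1 < m := by omega
      have hval : (k+1).val = k.val + 1 := succ_val k (by omega)
      have f1 : d1 m u k = u k := d1_lt hlt
      have f2 : d1 m u (k+1) = u (k+1) := d1_lt (by omega)
      simp only [Tset, Finset.mem_coe, Finset.mem_filter, Finset.mem_univ, true_and, id]
      constructor
      · omega
      · rw [f1, f2] at hne; exact hne
    · exact Set.injOn_id _
  have hb2 : (s.filter (fun k : ZMod (2*m) => ¬ k.val < m)).card ≤ (Tset m u).card := by
    apply Finset.card_le_card_of_injOn (fun k => ((2*m - 2 - k.val : ℕ) : ZMod (2*m)))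
    · intro k hk
      simp only [hs, Finset.mem_coe, Finset.mem_filter, Finset.mem_univ, true_and] at hk
      obtain ⟨hne, hge⟩ := hk
      have hv : k.val < 2*m := ZMod.val_lt k
      -- k.val ≠ 2m - 1
      have hne1 : k.val ≠ 2*m - 1 := by
        intro hh
        have hk1 : k + 1 = 0 := wrap_val k hh
        have f1 : d1 m u k = u 0 := by
          rw [d1_ge hge, hh, show 2*m - 1 - (2*m-1) = 0 from by omega, Nat.cast_zero]
        have f2 : d1 m u (k+1) = u 0 := by
          rw [hk1, d1_lt (by rw [ZMod.val_zero]; omega)]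
        exact hne (by rw [f1, f2])
      have hle : m ≤ k.val ∧ k.val + 1 < 2*m := by omega
      have hval : (k+1).val = k.val + 1 := succ_val k (by omega)
      have harg1 : ((2*m - 1 - k.val : ℕ) : ZMod (2*m))
          = ((2*m - 2 - k.val : ℕ) : ZMod (2*m)) + 1 := by
        rw [show 2*m - 1 - k.val = (2*m - 2 - k.val) + 1 from by omega]
        push_cast; ring
      have f1 : d1 m u k = u (((2*m - 2 - k.val : ℕ) : ZMod (2*m)) + 1) := by
        rw [d1_ge hge, harg1]
      have f2 : d1 m u (k+1) = u ((2*m - 2 - k.val : ℕ) : ZMod (2*m)) := by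
        rw [d1_ge (by omega : ¬ (k+1).val < m), hval,
          show 2*m - 1 - (k.val + 1) = 2*m - 2 - k.val from by omega]
      simp only [Tset, Finset.mem_coe, Finset.mem_filter, Finset.mem_univ, true_and]
      constructor
      · rw [ZMod.val_cast_of_lt (by omega : 2*m - 2 - k.val < 2*m)]; omega
      · rw [f1, f2] at hne; exact fun hh => hne (by rw [hh])
    · intro k hk k' hk'
      simp only [hs, Finset.coe_filter, Set.mem_setOf_eq, Finset.mem_filter] at hk hk'
      intro hh
      have hv : k.val < 2*m := ZMod.val_lt k
      have hv' : k'.val < 2*m := ZMod.val_lt k'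
      have e1 : ((2*m - 2 - k.val : ℕ) : ZMod (2*m)).val = 2*m - 2 - k.val :=
        ZMod.val_cast_of_lt (by omega)
      have e2 : ((2*m - 2 - k'.val : ℕ) : ZMod (2*m)).val = 2*m - 2 - k'.val :=
        ZMod.val_cast_of_lt (by omega)
      -- need k.val ≤ 2m-2 etc to cancel; get from previous part? redo:
      have hne1 : k.val ≠ 2*m - 1 := by
        intro hx
        obtain ⟨⟨-, hne⟩, -⟩ := hk
        have hk1 : k + 1 = 0 := wrap_val k hx
        have f1 : d1 m u k = u 0 := by
          rw [d1_ge (by omega), hx, show 2*m - 1 - (2*m-1) = 0 from by omega, Nat.cast_zero]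
        have f2 : d1 m u (k+1) = u 0 := by
          rw [hk1, d1_lt (by rw [ZMod.val_zero]; omega)]
        exact hne (by rw [f1, f2])
      have hne1' : k'.val ≠ 2*m - 1 := by
        intro hx
        obtain ⟨⟨-, hne⟩, -⟩ := hk'
        have hk1 : k' + 1 = 0 := wrap_val k' hx
        have f1 : d1 m u k' = u 0 := by
          rw [d1_ge (by omega), hx, show 2*m - 1 - (2*m-1) = 0 from by omega, Nat.cast_zero]
        have f2 : d1 m u (k'+1) = u 0 := by
          rw [hk1, d1_lt (by rw [ZMod.val_zero]; omega)]
        exact hne (by rw [f1, f2])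
      beta_reduce at hh
      have : (2*m - 2 - k.val : ℕ) = 2*m - 2 - k'.val := by
        rw [← e1, ← e2, hh]
      have hkk : k.val = k'.val := by omega
      rw [← cast_val k, ← cast_val k', hkk]
  calc nz m (d1 m u) = s.card := rfl
    _ = _ + _ := hsplit.symm
    _ ≤ (Tset m u).card + (Tset m u).card := Nat.add_le_add hb1 hb2
    _ = 2 * (Tset m u).card := by ring

end counting

section sums
variable {m : ℕ}

lemma card_window (hm : 1 ≤ m) [NeZero (2*m)] :
    (Finset.univ.filter (fun j : ZMod (2*m) => j.val < m - 1)).card = m - 1 := by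
  have key : (Finset.univ.filter (fun j : ZMod (2*m) => j.val < m - 1)).card
      = (Finset.range (m-1)).card := by
    apply Finset.card_bij' (fun (j : ZMod (2*m)) _ => j.val) (fun (a : ℕ) _ => (a : ZMod (2*m)))
    · intro j hj
      simp only [Finset.mem_filter, Finset.mem_univ, true_and] at hj
      simpa using hj
    · intro a ha
      simp only [Finset.mem_range] at ha
      simp only [Finset.mem_filter, Finset.mem_univ, true_and]
      rw [ZMod.val_cast_of_lt (by omega)]; exact ha
    · intro j _; exact cast_val j
    · intro a ha
      simp only [Finset.mem_range] at ha
      exact ZMod.val_cast_of_lt (by omega)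
  rw [key, Finset.card_range]

lemma sum_T (hm : 1 ≤ m) [NeZero (2*m)] (t : Word m) :
    ∑ r : ZMod (2*m), (Tset m (rot m t r)).card = (m - 1) * nz m t := by
  classical
  have step1 : ∀ r : ZMod (2*m), (Tset m (rot m t r)).card
      = ∑ j : ZMod (2*m), if j.val < m - 1 ∧ t (j + r + 1) ≠ t (j + r) then 1 else 0 := by
    intro r
    rw [Tset, Finset.card_filter]
    apply Finset.sum_congr rfl
    intro j _
    congr 1
    · show (j.val < m - 1 ∧ t (j + 1 + r) ≠ t (j + r)) = _
      rw [show j + 1 + r = j + r + 1 from by ring]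
  rw [Finset.sum_congr rfl (fun r _ => step1 r), Finset.sum_comm]
  have inner : ∀ j : ZMod (2*m),
      (∑ r : ZMod (2*m), if j.val < m - 1 ∧ t (j + r + 1) ≠ t (j + r) then 1 else 0)
      = if j.val < m - 1 then nz m t else 0 := by
    intro j
    by_cases hj : j.val < m - 1
    · rw [if_pos hj]
      have : ∀ r : ZMod (2*m), (if j.val < m - 1 ∧ t (j + r + 1) ≠ t (j + r) then 1 else 0)
          = (if t (j + r + 1) ≠ t (j + r) then 1 else 0) := by
        intro r; by_cases h : t (j + r + 1) ≠ t (j + r) <;> simp [h, hj]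
      rw [Finset.sum_congr rfl (fun r _ => this r)]
      rw [nz, Finset.card_filter]
      exact Fintype.sum_equiv (Equiv.addLeft j) _ _ (fun r => rfl)
    · rw [if_neg hj]
      apply Finset.sum_eq_zero
      intro r _
      rw [if_neg (by tauto)]
  rw [Finset.sum_congr rfl (fun j _ => inner j)]
  rw [← Finset.sum_filter, Finset.sum_const, card_window hm, smul_eq_mul]

lemma exists_reduce (hm : 1 ≤ m) [NeZero (2*m)] (t : Word m) (hn : 0 < nz m t) :
    ∃ r, nz m (d1 m (rot m t r)) < nz m t := by
  by_contra hcon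
  push_neg at hcon
  have hcard : Fintype.card (ZMod (2*m)) = 2*m := ZMod.card _
  have h1 : 2*m * nz m t ≤ ∑ r : ZMod (2*m), nz m (d1 m (rot m t r)) := by
    calc 2*m * nz m t = ∑ _r : ZMod (2*m), nz m t := by
          rw [Finset.sum_const, Finset.card_univ, hcard, smul_eq_mul]
      _ ≤ _ := Finset.sum_le_sum (fun r _ => hcon r)
  have h2 : ∑ r : ZMod (2*m), nz m (d1 m (rot m t r))
      ≤ 2 * ((m - 1) * nz m t) := by
    calc ∑ r : ZMod (2*m), nz m (d1 m (rot m t r))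
        ≤ ∑ r : ZMod (2*m), 2 * (Tset m (rot m t r)).card :=
          Finset.sum_le_sum (fun r _ => nz_d1_le hm _)
      _ = 2 * ((m - 1) * nz m t) := by rw [← Finset.mul_sum, sum_T hm]
  have := le_trans h1 h2
  nlinarith [Nat.sub_lt (by omega : 0 < m) (by omega : 0 < 1)]

end sums

section phi
variable {m : ℕ}

def countFun (m : ℕ) [NeZero (2*m)] (t : Word m) (j : ZMod (2*m)) : ℕ :=
  (Finset.univ.filter (fun k : ZMod (2*m) => t k = j)).card

lemma countFun_rot [NeZero (2*m)] (t : Word m) (r j : ZMod (2*m)) :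
    countFun m (rot m t r) j = countFun m t j := by
  apply Finset.card_bij' (fun (k : ZMod (2*m)) _ => k + r) (fun (k : ZMod (2*m)) _ => k - r)
  · intro k hk
    simp only [Finset.mem_filter, Finset.mem_univ, true_and] at hk ⊢
    exact hk
  · intro k hk
    simp only [Finset.mem_filter, Finset.mem_univ, true_and] at hk ⊢
    show t (k - r + r) = j
    rwa [sub_add_cancel]
  · intro k _; exact add_sub_cancel_right k r
  · intro k _; exact sub_add_cancel k r

noncomputable def countCl (m : ℕ) [NeZero (2*m)] : WCl m → (ZMod (2*m) → ℚ) :=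
  Quot.lift (fun a => fun j => (countFun m a.1 j : ℚ)) (by
    rintro a b ⟨r, hb⟩
    funext j
    rw [hb, countFun_rot])

lemma countCl_cls [NeZero (2*m)] (t : Word m) (h : Admissible m t) :
    countCl m (cls m t h) = fun j => (countFun m t j : ℚ) := rfl

noncomputable def phi (m : ℕ) [NeZero (2*m)] : (WCl m →₀ ℚ) →ₗ[ℚ] (ZMod (2*m) → ℚ) :=
  Finsupp.linearCombination ℚ (countCl m)

lemma phi_single [NeZero (2*m)] (w : WCl m) : phi m (Finsupp.single w 1) = countCl m w := by
  rw [phi, Finsupp.linearCombination_single, one_smul]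

lemma count_d1 (hm : 1 ≤ m) [NeZero (2*m)] (t : Word m) (j : ZMod (2*m)) :
    countFun m (d1 m t) j
      = 2 * (Finset.univ.filter (fun k : ZMod (2*m) => k.val < m ∧ t k = j)).card := by
  classical
  have hsplit : ((Finset.univ.filter (fun k : ZMod (2*m) => d1 m t k = j)).filter
        (fun k : ZMod (2*m) => k.val < m)).card
      + ((Finset.univ.filter (fun k : ZMod (2*m) => d1 m t k = j)).filter
        (fun k : ZMod (2*m) => ¬ k.val < m)).card
      = countFun m (d1 m t) j :=
    Finset.card_filter_add_card_filter_not _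
  have e1 : ((Finset.univ.filter (fun k : ZMod (2*m) => d1 m t k = j)).filter
        (fun k : ZMod (2*m) => k.val < m))
      = Finset.univ.filter (fun k : ZMod (2*m) => k.val < m ∧ t k = j) := by
    ext k
    simp only [Finset.mem_filter, Finset.mem_univ, true_and]
    constructor
    · rintro ⟨hd, hlt⟩; exact ⟨hlt, by rwa [d1_lt hlt] at hd⟩
    · rintro ⟨hlt, ht⟩; exact ⟨by rwa [d1_lt hlt], hlt⟩
  have e2 : ((Finset.univ.filter (fun k : ZMod (2*m) => d1 m t k = j)).filter
        (fun k : ZMod (2*m) => ¬ k.val < m)).card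
      = (Finset.univ.filter (fun k : ZMod (2*m) => k.val < m ∧ t k = j)).card := by
    apply Finset.card_bij' (fun (k : ZMod (2*m)) _ => ((2*m - 1 - k.val : ℕ) : ZMod (2*m)))
      (fun (k : ZMod (2*m)) _ => ((2*m - 1 - k.val : ℕ) : ZMod (2*m)))
    · intro k hk
      simp only [Finset.mem_filter, Finset.mem_univ, true_and] at hk ⊢
      obtain ⟨hd, hge⟩ := hk
      have hv : k.val < 2*m := ZMod.val_lt k
      have hvc : ((2*m - 1 - k.val : ℕ) : ZMod (2*m)).val = 2*m - 1 - k.val :=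
        ZMod.val_cast_of_lt (by omega)
      constructor
      · rw [hvc]; omega
      · rwa [d1_ge hge] at hd
    · intro k hk
      simp only [Finset.mem_filter, Finset.mem_univ, true_and] at hk ⊢
      obtain ⟨hlt, ht⟩ := hk
      have hvc : ((2*m - 1 - k.val : ℕ) : ZMod (2*m)).val = 2*m - 1 - k.val :=
        ZMod.val_cast_of_lt (by omega)
      have hge : ¬ ((2*m - 1 - k.val : ℕ) : ZMod (2*m)).val < m := by rw [hvc]; omega
      refine ⟨?_, hge⟩
      rw [d1_ge hge, hvc, show 2*m - 1 - (2*m - 1 - k.val) = k.val from by omega, cast_val]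
      exact ht
    · intro k hk
      simp only [Finset.mem_filter, Finset.mem_univ, true_and] at hk
      have hv : k.val < 2*m := ZMod.val_lt k
      have hvc : ((2*m - 1 - k.val : ℕ) : ZMod (2*m)).val = 2*m - 1 - k.val :=
        ZMod.val_cast_of_lt (by omega)
      rw [hvc, show 2*m - 1 - (2*m - 1 - k.val) = k.val from by omega, cast_val]
    · intro k hk
      simp only [Finset.mem_filter, Finset.mem_univ, true_and] at hk
      have hv : k.val < 2*m := ZMod.val_lt k
      have hvc : ((2*m - 1 - k.val : ℕ) : ZMod (2*m)).val = 2*m - 1 - k.val :=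
        ZMod.val_cast_of_lt (by omega)
      rw [hvc, show 2*m - 1 - (2*m - 1 - k.val) = k.val from by omega, cast_val]
  rw [← hsplit, e1, e2]; ring

lemma count_d2 (hm : 1 ≤ m) [NeZero (2*m)] (t : Word m) (j : ZMod (2*m)) :
    countFun m (d2 m t) j
      = 2 * (Finset.univ.filter (fun k : ZMod (2*m) => ¬ k.val < m ∧ t k = j)).card := by
  classical
  rw [d2, count_d1 hm]
  congr 1
  have hmm : ((m : ZMod (2*m)) + (m : ZMod (2*m))) = 0 := by
    rw [← Nat.cast_add, show m + m = 2*m from by ring, ZMod.natCast_self]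
  apply Finset.card_bij' (fun (k : ZMod (2*m)) _ => k + (m : ZMod (2*m)))
    (fun (k : ZMod (2*m)) _ => k + (m : ZMod (2*m)))
  · intro k hk
    simp only [Finset.mem_filter, Finset.mem_univ, true_and] at hk ⊢
    obtain ⟨hlt, ht⟩ := hk
    have hvm : (m : ZMod (2*m)).val = m := ZMod.val_cast_of_lt (by omega)
    have hval : (k + (m : ZMod (2*m))).val = k.val + m := by
      conv_lhs => rw [← cast_val k, ← Nat.cast_add]
      exact ZMod.val_cast_of_lt (by omega)
    constructor
    · rw [hval]; omega
    · show t (k + (m : ZMod (2*m))) = j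
      exact ht
  · intro k hk
    simp only [Finset.mem_filter, Finset.mem_univ, true_and] at hk ⊢
    obtain ⟨hge, ht⟩ := hk
    have hv : k.val < 2*m := ZMod.val_lt k
    have hval : (k + (m : ZMod (2*m))).val = k.val - m := by
      conv_lhs => rw [← cast_val k, ← Nat.cast_add,
        show k.val + m = (k.val - m) + 2*m from by omega, Nat.cast_add, ZMod.natCast_self,
        add_zero]
      exact ZMod.val_cast_of_lt (by omega)
    constructor
    · rw [hval]; omega
    · show rot m t (m : ZMod (2*m)) (k + (m : ZMod (2*m))) = j
      show t (k + (m : ZMod (2*m)) + (m : ZMod (2*m))) = j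
      rwa [add_assoc, hmm, add_zero]
  · intro k _; rw [add_assoc, hmm, add_zero]
  · intro k _; rw [add_assoc, hmm, add_zero]

lemma count_rel (hm : 1 ≤ m) [NeZero (2*m)] (t : Word m) (j : ZMod (2*m)) :
    countFun m (d1 m t) j + countFun m (d2 m t) j = 2 * countFun m t j := by
  classical
  rw [count_d1 hm, count_d2 hm]
  have : (Finset.univ.filter (fun k : ZMod (2*m) => k.val < m ∧ t k = j)).card
      + (Finset.univ.filter (fun k : ZMod (2*m) => ¬ k.val < m ∧ t k = j)).card
      = countFun m t j := by
    rw [countFun]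
    rw [show (Finset.univ.filter (fun k : ZMod (2*m) => k.val < m ∧ t k = j))
        = ((Finset.univ.filter (fun k : ZMod (2*m) => t k = j)).filter
          (fun k : ZMod (2*m) => k.val < m)) from by ext k; simp; tauto]
    rw [show (Finset.univ.filter (fun k : ZMod (2*m) => ¬ k.val < m ∧ t k = j))
        = ((Finset.univ.filter (fun k : ZMod (2*m) => t k = j)).filter
          (fun k : ZMod (2*m) => ¬ k.val < m)) from by ext k; simp; tauto]
    exact Finset.card_filter_add_card_filter_not _
  omega

end phi

section main
variable {m : ℕ}

lemma cls_rot (t : Word m) (h : Admissible m t) (r : ZMod (2*m)) (h' : Admissible m (rot m t r)) :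
    cls m t h = cls m (rot m t r) h' :=
  Quot.sound ⟨r, rfl⟩

lemma phi_kills_R (hm : 1 ≤ m) [NeZero (2*m)] : RSub m ≤ LinearMap.ker (phi m) := by
  rw [RSub, Submodule.span_le]
  rintro u ⟨t, ht, h1, h2, rfl⟩
  simp only [SetLike.mem_coe, LinearMap.mem_ker, map_sub, map_smul, phi_single]
  funext j
  simp only [Pi.sub_apply, Pi.smul_apply, Pi.zero_apply, smul_eq_mul]
  rw [countCl_cls, countCl_cls, countCl_cls]
  have := count_rel hm t j
  push_cast
  have h2' : ((countFun m (d1 m t) j : ℚ) + countFun m (d2 m t) j = 2 * countFun m t j) := by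
    exact_mod_cast congrArg (fun n : ℕ => (n : ℚ)) this
  linarith

lemma key_le (hm : 1 ≤ m) (l : (WCl m →₀ ℚ) →ₗ[ℚ] ℚ)
    (hR : RSub m ≤ LinearMap.ker l) (hM : MOne m ≤ LinearMap.ker l)
    (t : Word m) (ht : Admissible m t) : l (Finsupp.single (cls m t ht) 1) ≤ 0 := by
  classical
  haveI : NeZero (2*m) := ⟨by omega⟩
  set F : Word m → ℚ := fun u => if h : Admissible m u then l (Finsupp.single (cls m u h) 1) else 0
    with hF
  have hFval : ∀ (u : Word m) (h : Admissible m u), F u = l (Finsupp.single (cls m u h) 1) := by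
    intro u h; rw [hF]; exact dif_pos h
  set A : Finset (Word m) := Finset.univ.filter (fun u => Admissible m u) with hA
  have hmemA : ∀ u : Word m, Admissible m u → u ∈ A := by
    intro u hu; rw [hA]; simp [hu]
  have hAne : A.Nonempty := ⟨fun _ => 0, hmemA _ (const_admissible hm 0)⟩
  have hIne : (A.image F).Nonempty := hAne.image F
  set M : ℚ := (A.image F).max' hIne with hM'
  have hle : ∀ u : Word m, Admissible m u → F u ≤ M := by
    intro u hu
    exact Finset.le_max' _ _ (Finset.mem_image_of_mem F (hmemA u hu))
  -- constants give value 0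
  have hconst : ∀ i : ZMod (2*m), F (fun _ => i) = 0 := by
    intro i
    rw [hFval _ (const_admissible hm i)]
    have : Finsupp.single (cls m (fun _ => i) (const_admissible hm i)) (1:ℚ) ∈ MOne m := by
      apply Submodule.subset_span
      exact ⟨i, const_admissible hm i, rfl⟩
    exact (LinearMap.mem_ker).mp (hM this)
  -- M = 0
  have hM0 : M = 0 := by
    obtain ⟨t0, ht0A, ht0⟩ := Finset.mem_image.mp ((A.image F).max'_mem hIne)
    set S : Finset (Word m) := A.filter (fun u => F u = M) with hS
    have hSne : S.Nonempty := ⟨t0, by rw [hS]; simp only [Finset.mem_filter]; exact ⟨ht0A, ht0⟩⟩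
    obtain ⟨u, huS, humin⟩ := Finset.exists_min_image S (nz m) hSne
    have huA : u ∈ A := (Finset.mem_filter.mp huS).1
    have huadm : Admissible m u := by
      rw [hA] at huA; simpa using huA
    have huM : F u = M := (Finset.mem_filter.mp huS).2
    by_cases hnz : nz m u = 0
    · obtain ⟨i, rfl⟩ := nz_zero_const u hnz
      rw [← huM, hconst i]
    · obtain ⟨r, hr⟩ := exists_reduce hm u (Nat.pos_of_ne_zero hnz)
      set v := rot m u r with hv
      have hvadm : Admissible m v := rot_admissible u huadm r
      have h1 : Admissible m (d1 m v) := d1_admissible hm v hvadm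
      have h2 : Admissible m (d2 m v) := d2_admissible hm v hvadm
      have hrel : (2:ℚ) • Finsupp.single (cls m v hvadm) 1
          - Finsupp.single (cls m (d1 m v) h1) 1
          - Finsupp.single (cls m (d2 m v) h2) 1 ∈ RSub m := by
        apply Submodule.subset_span
        exact ⟨v, hvadm, h1, h2, rfl⟩
      have hzero : (2:ℚ) * l (Finsupp.single (cls m v hvadm) 1)
          = l (Finsupp.single (cls m (d1 m v) h1) 1)
            + l (Finsupp.single (cls m (d2 m v) h2) 1) := by
        have := (LinearMap.mem_ker).mp (hR hrel)
        simp only [map_sub, map_smul, smul_eq_mul] at this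
        linarith
      have hclsv : cls m v hvadm = cls m u huadm := (cls_rot u huadm r hvadm).symm
      have hFv : l (Finsupp.single (cls m v hvadm) 1) = M := by
        rw [hclsv, ← hFval u huadm, huM]
      have hd1le : l (Finsupp.single (cls m (d1 m v) h1) 1) ≤ M := by
        rw [← hFval _ h1]; exact hle _ h1
      have hd2le : l (Finsupp.single (cls m (d2 m v) h2) 1) ≤ M := by
        rw [← hFval _ h2]; exact hle _ h2
      have hd1M : l (Finsupp.single (cls m (d1 m v) h1) 1) = M := by
        rw [hFv] at hzero; linarith
      have hd1S : d1 m v ∈ S := by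
        rw [hS, Finset.mem_filter]
        exact ⟨hmemA _ h1, by rw [hFval _ h1, hd1M]⟩
      have := humin _ hd1S
      exact absurd hr (not_lt.mpr this)
  calc l (Finsupp.single (cls m t ht) 1) = F t := (hFval t ht).symm
    _ ≤ M := hle t ht
    _ = 0 := hM0

end main

section final
variable {m : ℕ}

lemma count_const [NeZero (2*m)] (i j : ZMod (2*m)) :
    countFun m (fun _ => i) j = if i = j then 2*m else 0 := by
  classical
  rw [countFun]
  by_cases h : i = j
  · subst h
    rw [if_pos rfl,
      show (Finset.univ.filter fun k : ZMod (2*m) => (fun _ => i) k = i) = Finset.univ from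
        Finset.filter_true_of_mem (fun k _ => rfl),
      Finset.card_univ, ZMod.card]
  · rw [if_neg h]
    rw [Finset.filter_false_of_mem (by intro k _; exact h)]
    exact Finset.card_empty

lemma single_mem_sup (hm : 1 ≤ m) (w : WCl m) :
    Finsupp.single w (1:ℚ) ∈ MOne m ⊔ RSub m := by
  haveI : NeZero (2*m) := ⟨by omega⟩
  have hx : ∀ f : Module.Dual ℚ ((WCl m →₀ ℚ) ⧸ (MOne m ⊔ RSub m)),
      f (Submodule.Quotient.mk (Finsupp.single w 1)) = 0 := by
    intro f
    set l := f.comp (MOne m ⊔ RSub m).mkQ with hl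
    have hker : ∀ x ∈ MOne m ⊔ RSub m, l x = 0 := by
      intro x hxm
      have : (MOne m ⊔ RSub m).mkQ x = 0 := by
        rw [Submodule.mkQ_apply, Submodule.Quotient.mk_eq_zero]; exact hxm
      simp [hl, LinearMap.comp_apply, this]
    have hR : RSub m ≤ LinearMap.ker l := fun x hxr =>
      LinearMap.mem_ker.mpr (hker x (Submodule.mem_sup_right hxr))
    have hMl : MOne m ≤ LinearMap.ker l := fun x hxm =>
      LinearMap.mem_ker.mpr (hker x (Submodule.mem_sup_left hxm))
    have hRn : RSub m ≤ LinearMap.ker (-l) := fun x hxr => by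
      simp only [LinearMap.mem_ker, LinearMap.neg_apply, neg_eq_zero]
      exact LinearMap.mem_ker.mp (hR hxr)
    have hMn : MOne m ≤ LinearMap.ker (-l) := fun x hxm => by
      simp only [LinearMap.mem_ker, LinearMap.neg_apply, neg_eq_zero]
      exact LinearMap.mem_ker.mp (hMl hxm)
    obtain ⟨a, rfl⟩ := Quot.exists_rep w
    have h1 : l (Finsupp.single (cls m a.1 a.2) 1) ≤ 0 := key_le hm l hR hMl a.1 a.2
    have h2 : (-l) (Finsupp.single (cls m a.1 a.2) 1) ≤ 0 := key_le hm (-l) hRn hMn a.1 a.2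
    rw [LinearMap.neg_apply, neg_nonpos] at h2
    have h3 : l (Finsupp.single (cls m a.1 a.2) 1) = 0 := le_antisymm h1 h2
    have ha : cls m a.1 a.2 = Quot.mk _ a := rfl
    rw [ha] at h3
    simpa [hl, LinearMap.comp_apply] using h3
  have h0 := (Module.forall_dual_apply_eq_zero_iff ℚ _).mp hx
  rwa [Submodule.Quotient.mk_eq_zero] at h0

lemma sup_eq_top (hm : 1 ≤ m) : MOne m ⊔ RSub m = ⊤ := by
  rw [Submodule.eq_top_iff']
  intro u
  have hrep : u = u.sum (fun w c => Finsupp.single w c) := (Finsupp.sum_single u).symm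
  rw [hrep, Finsupp.sum]
  apply Submodule.sum_mem
  intro w _
  have : Finsupp.single w (u w) = (u w) • Finsupp.single w (1:ℚ) := by
    rw [Finsupp.smul_single, smul_eq_mul, mul_one]
  rw [this]
  exact Submodule.smul_mem _ _ (single_mem_sup hm w)

end final


/-- The composite of the inclusion `M₁ ↪ U` with the quotient map `U → U/R`
is a ℚ-linear isomorphism from `M₁` onto `U/R`. -/
theorem mone_iso_quotient (m : ℕ) (hm : 1 ≤ m) :
    Function.Bijective ((RSub m).mkQ.comp (MOne m).subtype) := by
  haveI : NeZero (2*m) := ⟨by omega⟩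
  constructor
  · rw [← LinearMap.ker_eq_bot]
    rw [Submodule.eq_bot_iff]
    intro x hx
    rw [LinearMap.mem_ker, LinearMap.comp_apply, Submodule.subtype_apply] at hx
    have hx1 : (x : WCl m →₀ ℚ) ∈ RSub m := by
      rwa [Submodule.mkQ_apply, Submodule.Quotient.mk_eq_zero] at hx
    have hphi : phi m (x : WCl m →₀ ℚ) = 0 := LinearMap.mem_ker.mp (phi_kills_R hm hx1)
    have hxM : (x : WCl m →₀ ℚ) ∈ MOne m := x.2
    have hrange : {u : WCl m →₀ ℚ | ∃ (i : ZMod (2*m)) (h : Admissible m (fun _ => i)),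
        u = Finsupp.single (cls m (fun _ => i) h) 1}
        = Set.range (fun i : ZMod (2*m) =>
            Finsupp.single (cls m (fun _ => i) (const_admissible hm i)) (1:ℚ)) := by
      ext u
      constructor
      · rintro ⟨i, h, rfl⟩; exact ⟨i, rfl⟩
      · rintro ⟨i, rfl⟩; exact ⟨i, const_admissible hm i, rfl⟩
    have hxM' : (x : WCl m →₀ ℚ) ∈ Submodule.span ℚ (Set.range (fun i : ZMod (2*m) =>
        Finsupp.single (cls m (fun _ => i) (const_admissible hm i)) (1:ℚ))) := by
      rw [← hrange]; exact hxM
    obtain ⟨c, hc⟩ := (Submodule.mem_span_range_iff_exists_fun ℚ).mp hxM'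
    have hphi2 : ∑ i : ZMod (2*m), c i •
        phi m (Finsupp.single (cls m (fun _ => i) (const_admissible hm i)) (1:ℚ)) = 0 := by
      calc ∑ i : ZMod (2*m), c i •
            phi m (Finsupp.single (cls m (fun _ => i) (const_admissible hm i)) (1:ℚ))
          = phi m (∑ i : ZMod (2*m), c i •
            Finsupp.single (cls m (fun _ => i) (const_admissible hm i)) (1:ℚ)) := by
            rw [map_sum]
            exact Finset.sum_congr rfl (fun i _ => (map_smul (phi m) _ _).symm)
        _ = 0 := by rw [hc, hphi]
    have hcz : ∀ j : ZMod (2*m), c j = 0 := by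
      intro j
      have := congrFun hphi2 j
      rw [Finset.sum_apply] at this
      have heval : ∀ i : ZMod (2*m), (c i •
          phi m (Finsupp.single (cls m (fun _ => i) (const_admissible hm i)) (1:ℚ))) j
          = if i = j then c i * (2*m : ℚ) else 0 := by
        intro i
        rw [Pi.smul_apply, phi_single, countCl_cls, smul_eq_mul]
        beta_reduce
        rw [count_const i j]
        by_cases h : i = j
        · rw [if_pos h, if_pos h]; push_cast; ring
        · rw [if_neg h, if_neg h]; push_cast; ring
      rw [Finset.sum_congr rfl (fun i _ => heval i),
        Finset.sum_ite_eq' Finset.univ j (fun i => c i * (2*m : ℚ)),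
        if_pos (Finset.mem_univ j), Pi.zero_apply] at this
      have h2m : (2*(m:ℚ)) ≠ 0 := by
        have hm0 : (m:ℚ) ≠ 0 := Nat.cast_ne_zero.mpr (by omega)
        exact mul_ne_zero two_ne_zero hm0
      rcases mul_eq_zero.mp this with h | h
      · exact h
      · exact absurd h h2m
    have hx0 : (x : WCl m →₀ ℚ) = 0 := by
      rw [← hc]
      apply Finset.sum_eq_zero
      intro i _
      rw [hcz i, zero_smul]
    exact Subtype.ext hx0
  · intro y
    obtain ⟨u, rfl⟩ := Submodule.mkQ_surjective (RSub m) y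
    have hu : u ∈ MOne m ⊔ RSub m := by rw [sup_eq_top hm]; exact Submodule.mem_top
    obtain ⟨a, ha, b, hb, rfl⟩ := Submodule.mem_sup.mp hu
    refine ⟨⟨a, ha⟩, ?_⟩
    have hbz : (RSub m).mkQ b = 0 := by
      rw [Submodule.mkQ_apply, Submodule.Quotient.mk_eq_zero]; exact hb
    rw [LinearMap.comp_apply, Submodule.subtype_apply]
    show (RSub m).mkQ a = (RSub m).mkQ (a + b)
    rw [map_add, hbz, add_zero]
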